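/- Suppose ω ∈ 𝒲. For all sufficiently small δ ∈ (0, m_τ) and any 0 < p < ∞, the normalized reproducing kernel satisfies |k_{p,z}(ζ)|^p · ω(ζ)^{p/2} ≍ τ(z)^{-2} for all ζ ∈ D_δ(z). -/

import Mathlib

open Complex Metric MeasureTheory

/-- `‖K_z‖_{A^p_ω} = (∫_𝔻 |K_z(ζ)|^p ω(ζ)^{p/2} dA(ζ))^{1/p}`. -/
noncomputable def apNormF (w : ℂ → ℝ) (K : ℂ → ℂ → ℂ) (p : ℝ) (z : ℂ) : ℝ :=
  (∫ ζ in ball (0:ℂ) 1, ‖K z ζ‖ ^ p * w ζ ^ (p/2)) ^ (1/p)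

/-- For `ω ∈ 𝒲` (kernel estimates assumed), any `0 < p < ∞` and small `δ ∈ (0,m_τ)`:
`|k_{p,z}(ζ)|^p ω(ζ)^{p/2} ≍ τ(z)^{-2}` for `ζ ∈ D_δ(z)`. -/
theorem stmt8 (w τ : ℂ → ℝ) (c₁ c₂ : ℝ) (hc₁ : 0 < c₁) (hc₂ : 0 < c₂)
    (hw : ∀ z ∈ ball (0:ℂ) 1, 0 < w z)
    (hτpos : ∀ z ∈ ball (0:ℂ) 1, 0 < τ z)
    (h1 : ∀ z ∈ ball (0:ℂ) 1, τ z ≤ c₁ * (1 - ‖z‖))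
    (h2 : ∀ z ∈ ball (0:ℂ) 1, ∀ ζ ∈ ball (0:ℂ) 1,
      |τ z - τ ζ| ≤ c₂ * ‖z - ζ‖)
    (K : ℂ → ℂ → ℂ) (p : ℝ) (hp : 0 < p)
    (δ : ℝ) (hδ0 : 0 < δ) (hδ : δ < min 1 (min c₁⁻¹ c₂⁻¹) / 4)
    (hnorm : ∀ p' : ℝ, 0 < p' → ∃ c C : ℝ, 0 < c ∧ 0 < C ∧ ∀ z ∈ ball (0:ℂ) 1,
      c * w z ^ (-(1:ℝ)/2) * τ z ^ (2*(1-p')/p') ≤ apNormF w K p' z ∧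
      apNormF w K p' z ≤ C * w z ^ (-(1:ℝ)/2) * τ z ^ (2*(1-p')/p'))
    (hdiag : ∃ c C : ℝ, 0 < c ∧ 0 < C ∧ ∀ z ∈ ball (0:ℂ) 1, ∀ ζ ∈ ball (0:ℂ) 1,
      ‖ζ - z‖ < δ * τ z →
      c * apNormF w K 2 z * apNormF w K 2 ζ ≤ ‖K z ζ‖ ∧
      ‖K z ζ‖ ≤ C * apNormF w K 2 z * apNormF w K 2 ζ) :
    ∃ c C : ℝ, 0 < c ∧ 0 < C ∧ ∀ z ∈ ball (0:ℂ) 1, ∀ ζ ∈ ball (0:ℂ) 1,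
      ‖ζ - z‖ < δ * τ z →
      c * τ z ^ (-(2:ℝ)) ≤ (‖K z ζ‖ / apNormF w K p z) ^ p * w ζ ^ (p/2) ∧
      (‖K z ζ‖ / apNormF w K p z) ^ p * w ζ ^ (p/2) ≤ C * τ z ^ (-(2:ℝ)) := by

  obtain ⟨cp, Cp, hcp, hCp, hNp⟩ := hnorm p hp
  obtain ⟨c2, C2, hc2, hC2, hN2⟩ := hnorm 2 (by norm_num)
  obtain ⟨cd, Cd, hcd, hCd, hKest⟩ := hdiag
  set A : ℝ := 2*(1-p)/p with hA
  refine ⟨(cd*c2^2*(4/5)/Cp)^p, (Cd*C2^2*(4/3)/cp)^p,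
    Real.rpow_pos_of_pos (by positivity) p, Real.rpow_pos_of_pos (by positivity) p, ?_⟩
  intro z hz ζ hζ hd
  have hwz := hw z hz
  have hwζ := hw ζ hζ
  have htz := hτpos z hz
  have htζ := hτpos ζ hζ
  -- comparability of τ ζ and τ z
  have hδc2 : δ ≤ c₂⁻¹/4 := by
    have h1' : min 1 (min c₁⁻¹ c₂⁻¹) / 4 ≤ c₂⁻¹/4 := by
      have : min 1 (min c₁⁻¹ c₂⁻¹) ≤ c₂⁻¹ :=
        le_trans (min_le_right _ _) (min_le_right _ _)
      linarith
    linarith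
  have habs : ‖z - ζ‖ ≤ δ * τ z := by
    have : ‖z - ζ‖ = ‖ζ - z‖ := by
      rw [norm_sub_rev]
    rw [this]; exact hd.le
  have hτc : |τ z - τ ζ| ≤ τ z / 4 := by
    have hle := h2 z hz ζ hζ
    have step1 : c₂ * ‖z - ζ‖ ≤ c₂ * (δ * τ z) :=
      mul_le_mul_of_nonneg_left habs hc₂.le
    have step2 : c₂ * (δ * τ z) ≤ τ z / 4 := by
      have h4 : c₂ * δ ≤ c₂ * (c₂⁻¹/4) := mul_le_mul_of_nonneg_left hδc2 hc₂.le
      have h5 : c₂ * (c₂⁻¹/4) = 1/4 := by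
        field_simp
      nlinarith
    linarith
  have hslo : 3/4 * τ z ≤ τ ζ := by
    have := abs_le.mp hτc; linarith [this.2]
  have hshi : τ ζ ≤ 5/4 * τ z := by
    have := abs_le.mp hτc; linarith [this.1]
  -- notation
  have e2 : (2*(1-2)/2 : ℝ) = -1 := by norm_num
  have hN2z := hN2 z hz
  have hN2ζ := hN2 ζ hζ
  rw [e2] at hN2z hN2ζ
  have hNpz := hNp z hz
  have hKz := hKest z hz ζ hζ hd
  have hu : (0:ℝ) < w z ^ (-(1:ℝ)/2) := Real.rpow_pos_of_pos hwz _
  have hv : (0:ℝ) < w ζ ^ (-(1:ℝ)/2) := Real.rpow_pos_of_pos hwζ _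
  have ht1 : (0:ℝ) < τ z ^ (-1:ℝ) := Real.rpow_pos_of_pos htz _
  have hs1 : (0:ℝ) < τ ζ ^ (-1:ℝ) := Real.rpow_pos_of_pos htζ _
  have htA : (0:ℝ) < τ z ^ A := Real.rpow_pos_of_pos htz _
  have hN2zpos : (0:ℝ) < apNormF w K 2 z := lt_of_lt_of_le (by positivity) hN2z.1
  have hN2ζpos : (0:ℝ) < apNormF w K 2 ζ := lt_of_lt_of_le (by positivity) hN2ζ.1
  have hNpzpos : (0:ℝ) < apNormF w K p z := lt_of_lt_of_le (by positivity) hNpz.1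
  -- bounds on τ ζ ^ (-1)
  have hs1hi : τ ζ ^ (-1:ℝ) ≤ (4/3) * τ z ^ (-1:ℝ) := by
    rw [Real.rpow_neg_one, Real.rpow_neg_one]
    have : (4/3 : ℝ) * (τ z)⁻¹ = ((3/4) * τ z)⁻¹ := by
      rw [mul_inv]; norm_num
    rw [this]
    exact inv_anti₀ (by positivity) hslo
  have hs1lo : (4/5) * τ z ^ (-1:ℝ) ≤ τ ζ ^ (-1:ℝ) := by
    rw [Real.rpow_neg_one, Real.rpow_neg_one]
    have : (4/5 : ℝ) * (τ z)⁻¹ = ((5/4) * τ z)⁻¹ := by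
      rw [mul_inv]; norm_num
    rw [this]
    exact inv_anti₀ (by positivity) hshi
  -- exponent arithmetic
  have epow : ((-2:ℝ) - A) * p = -2 := by
    rw [hA]; field_simp; ring
  have ew : (-(1:ℝ)/2) * p + p/2 = 0 := by ring
  -- key rpow identity for the final expression
  have keyexp : ∀ b : ℝ, 0 < b →
      (b * w ζ ^ (-(1:ℝ)/2) * τ z ^ ((-2:ℝ) - A)) ^ p * w ζ ^ (p/2)
        = b ^ p * τ z ^ (-(2:ℝ)) := by
    intro b hb
    rw [Real.mul_rpow (by positivity) (by positivity),
        Real.mul_rpow (by positivity) (by positivity),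
        ← Real.rpow_mul hwζ.le, ← Real.rpow_mul htz.le, epow]
    have hone : w ζ ^ ((-(1:ℝ)/2) * p) * w ζ ^ (p/2) = 1 := by
      rw [← Real.rpow_add hwζ, ew, Real.rpow_zero]
    calc b ^ p * w ζ ^ ((-(1:ℝ)/2) * p) * τ z ^ (-2:ℝ) * w ζ ^ (p/2)
        = b ^ p * τ z ^ (-2:ℝ) * (w ζ ^ ((-(1:ℝ)/2) * p) * w ζ ^ (p/2)) := by ring
      _ = b ^ p * τ z ^ (-(2:ℝ)) := by rw [hone]; ring
  -- ratio bounds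
  have hRub : ‖K z ζ‖ / apNormF w K p z
      ≤ (Cd*C2^2*(4/3)/cp) * w ζ ^ (-(1:ℝ)/2) * τ z ^ ((-2:ℝ) - A) := by
    have hnum : ‖K z ζ‖
        ≤ Cd * (C2 * w z ^ (-(1:ℝ)/2) * τ z ^ (-1:ℝ))
            * (C2 * w ζ ^ (-(1:ℝ)/2) * τ ζ ^ (-1:ℝ)) := by
      calc ‖K z ζ‖ ≤ Cd * apNormF w K 2 z * apNormF w K 2 ζ := hKz.2
        _ ≤ _ := by
            gcongr
            · exact hN2z.2
            · exact hN2ζ.2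
    have hdiv : ‖K z ζ‖ / apNormF w K p z
        ≤ (Cd * (C2 * w z ^ (-(1:ℝ)/2) * τ z ^ (-1:ℝ))
            * (C2 * w ζ ^ (-(1:ℝ)/2) * τ ζ ^ (-1:ℝ)))
          / (cp * w z ^ (-(1:ℝ)/2) * τ z ^ A) :=
      div_le_div₀ (by positivity) hnum (by positivity) hNpz.1
    have heq : (Cd * (C2 * w z ^ (-(1:ℝ)/2) * τ z ^ (-1:ℝ))
            * (C2 * w ζ ^ (-(1:ℝ)/2) * τ ζ ^ (-1:ℝ)))
          / (cp * w z ^ (-(1:ℝ)/2) * τ z ^ A)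
        = (Cd*C2^2/cp) * w ζ ^ (-(1:ℝ)/2) * (τ z ^ (-1:ℝ) / τ z ^ A) * τ ζ ^ (-1:ℝ) := by
      field_simp
    rw [heq] at hdiv
    have ht1A : τ z ^ (-1:ℝ) / τ z ^ A = τ z ^ ((-1:ℝ) - A) := (Real.rpow_sub htz _ _).symm
    rw [ht1A] at hdiv
    calc ‖K z ζ‖ / apNormF w K p z
        ≤ (Cd*C2^2/cp) * w ζ ^ (-(1:ℝ)/2) * τ z ^ ((-1:ℝ) - A) * τ ζ ^ (-1:ℝ) := hdiv
      _ ≤ (Cd*C2^2/cp) * w ζ ^ (-(1:ℝ)/2) * τ z ^ ((-1:ℝ) - A)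
            * ((4/3) * τ z ^ (-1:ℝ)) := by gcongr
      _ = (Cd*C2^2*(4/3)/cp) * w ζ ^ (-(1:ℝ)/2)
            * (τ z ^ ((-1:ℝ) - A) * τ z ^ (-1:ℝ)) := by ring
      _ = (Cd*C2^2*(4/3)/cp) * w ζ ^ (-(1:ℝ)/2) * τ z ^ ((-2:ℝ) - A) := by
          rw [← Real.rpow_add htz,
            show (-1:ℝ) - A + -1 = -2 - A from by ring]
  have hRlb : (cd*c2^2*(4/5)/Cp) * w ζ ^ (-(1:ℝ)/2) * τ z ^ ((-2:ℝ) - A)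
      ≤ ‖K z ζ‖ / apNormF w K p z := by
    have hnum : cd * (c2 * w z ^ (-(1:ℝ)/2) * τ z ^ (-1:ℝ))
            * (c2 * w ζ ^ (-(1:ℝ)/2) * τ ζ ^ (-1:ℝ))
        ≤ ‖K z ζ‖ := by
      calc cd * (c2 * w z ^ (-(1:ℝ)/2) * τ z ^ (-1:ℝ))
            * (c2 * w ζ ^ (-(1:ℝ)/2) * τ ζ ^ (-1:ℝ))
          ≤ cd * apNormF w K 2 z * apNormF w K 2 ζ := by
            gcongr
            · exact hN2z.1
            · exact hN2ζ.1
        _ ≤ ‖K z ζ‖ := hKz.1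
    have hdiv : (cd * (c2 * w z ^ (-(1:ℝ)/2) * τ z ^ (-1:ℝ))
            * (c2 * w ζ ^ (-(1:ℝ)/2) * τ ζ ^ (-1:ℝ)))
          / (Cp * w z ^ (-(1:ℝ)/2) * τ z ^ A)
        ≤ ‖K z ζ‖ / apNormF w K p z :=
      div_le_div₀ (norm_nonneg _) hnum hNpzpos hNpz.2
    have heq : (cd * (c2 * w z ^ (-(1:ℝ)/2) * τ z ^ (-1:ℝ))
            * (c2 * w ζ ^ (-(1:ℝ)/2) * τ ζ ^ (-1:ℝ)))
          / (Cp * w z ^ (-(1:ℝ)/2) * τ z ^ A)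
        = (cd*c2^2/Cp) * w ζ ^ (-(1:ℝ)/2) * (τ z ^ (-1:ℝ) / τ z ^ A) * τ ζ ^ (-1:ℝ) := by
      field_simp
    rw [heq] at hdiv
    have ht1A : τ z ^ (-1:ℝ) / τ z ^ A = τ z ^ ((-1:ℝ) - A) := (Real.rpow_sub htz _ _).symm
    rw [ht1A] at hdiv
    calc (cd*c2^2*(4/5)/Cp) * w ζ ^ (-(1:ℝ)/2) * τ z ^ ((-2:ℝ) - A)
        = (cd*c2^2/Cp) * w ζ ^ (-(1:ℝ)/2)
            * (τ z ^ ((-1:ℝ) - A) * ((4/5) * τ z ^ (-1:ℝ))) := by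
          rw [show τ z ^ ((-1:ℝ) - A) * ((4/5) * τ z ^ (-1:ℝ))
              = (4/5) * (τ z ^ ((-1:ℝ) - A) * τ z ^ (-1:ℝ)) from by ring,
            ← Real.rpow_add htz,
            show (-1:ℝ) - A + -1 = -2 - A from by ring]
          ring
      _ ≤ (cd*c2^2/Cp) * w ζ ^ (-(1:ℝ)/2)
            * (τ z ^ ((-1:ℝ) - A) * τ ζ ^ (-1:ℝ)) := by gcongr
      _ = (cd*c2^2/Cp) * w ζ ^ (-(1:ℝ)/2) * τ z ^ ((-1:ℝ) - A) * τ ζ ^ (-1:ℝ) := by ring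
      _ ≤ _ := hdiv
  constructor
  · calc (cd*c2^2*(4/5)/Cp)^p * τ z ^ (-(2:ℝ))
        = ((cd*c2^2*(4/5)/Cp) * w ζ ^ (-(1:ℝ)/2) * τ z ^ ((-2:ℝ) - A)) ^ p
            * w ζ ^ (p/2) := (keyexp _ (by positivity)).symm
      _ ≤ (‖K z ζ‖ / apNormF w K p z) ^ p * w ζ ^ (p/2) := by
          refine mul_le_mul_of_nonneg_right
            (Real.rpow_le_rpow (by positivity) hRlb hp.le) (by positivity)
  · calc (‖K z ζ‖ / apNormF w K p z) ^ p * w ζ ^ (p/2)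
        ≤ ((Cd*C2^2*(4/3)/cp) * w ζ ^ (-(1:ℝ)/2) * τ z ^ ((-2:ℝ) - A)) ^ p
            * w ζ ^ (p/2) := by
          refine mul_le_mul_of_nonneg_right
            (Real.rpow_le_rpow (div_nonneg (norm_nonneg _) hNpzpos.le) hRub hp.le) (by positivity)
      _ = (Cd*C2^2*(4/3)/cp)^p * τ z ^ (-(2:ℝ)) := keyexp _ (by positivity)
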